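/- Let R be a commutative ring, N ≥ 1, and let ⪯ be a monomial order on the polynomial ring R[x_1,…,x_N] such that the monomial x_i is strictly smaller than x_j whenever i < j. Let u be the R-algebra endomorphism of R[x_1,…,x_N] determined by u(x_j) = x_j + Σ_{i<j} g_{ij} x_i for some scalars g_{ij} ∈ R. Then u is an R-algebra automorphism, and for every ideal I ⊆ R[x_1,…,x_N] the ideals I and u(I) have the same initial ideal: the set of pairs (⪯-largest monomial, leading coefficient) of nonzero elements of I equals the corresponding set for the image ideal u(I). -/

import Mathlib

open MvPolynomial

section Aux

variable {R : Type*} [CommRing R] {N : ℕ}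
variable {le : (Fin N →₀ ℕ) → (Fin N →₀ ℕ) → Prop}

/-- strict version of `le` -/
def AuxLt (le : (Fin N →₀ ℕ) → (Fin N →₀ ℕ) → Prop) (a b : Fin N →₀ ℕ) : Prop := ¬ le b a

/-- all monomials of `f` are strictly below `α` -/
def AuxBelow (le : (Fin N →₀ ℕ) → (Fin N →₀ ℕ) → Prop) (f : MvPolynomial (Fin N) R)
    (α : Fin N →₀ ℕ) : Prop := ∀ β ∈ f.support, AuxLt le β α

variable (hlin : IsLinearOrder (Fin N →₀ ℕ) le)
  (hmul : ∀ a b c, le a b → le (a + c) (b + c))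

include hlin in
lemma auxlt_le {a b : Fin N →₀ ℕ} (h : AuxLt le a b) : le a b := by
  haveI := hlin
  exact (total_of le a b).resolve_right h

include hlin in
lemma aux_le_lt_trans {a b c : Fin N →₀ ℕ} (h1 : le a b) (h2 : AuxLt le b c) : AuxLt le a c := by
  haveI := hlin
  intro hca
  exact h2 (trans_of le hca h1)

include hlin hmul in
lemma auxlt_add {a b : Fin N →₀ ℕ} (c : Fin N →₀ ℕ) (h : AuxLt le a b) :
    AuxLt le (a + c) (b + c) := by
  haveI := hlin
  intro hba
  have hab : le (a + c) (b + c) := hmul _ _ _ (auxlt_le hlin h)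
  have : a + c = b + c := antisymm_of le hab hba
  exact h (add_right_cancel this ▸ refl_of le a)

include hlin hmul in
lemma auxlt_add_of_le_lt {a b c d : Fin N →₀ ℕ} (h1 : le a b) (h2 : AuxLt le c d) :
    AuxLt le (a + c) (b + d) := by
  haveI := hlin
  have s1 : le (a + c) (b + c) := hmul _ _ _ h1
  have s2 : AuxLt le (b + c) (b + d) := by
    have := auxlt_add hlin hmul b h2
    simpa [add_comm] using this
  exact aux_le_lt_trans hlin s1 s2

include hlin hmul in
lemma auxBelow_mul {p f : MvPolynomial (Fin N) R} {a b : Fin N →₀ ℕ}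
    (hp : AuxBelow le p a) (hf : ∀ γ ∈ f.support, le γ b) :
    AuxBelow le (p * f) (a + b) := by
  classical
  intro β hβ
  obtain ⟨c, hc, d, hd, rfl⟩ := Finset.mem_add.1 (MvPolynomial.support_mul p f hβ)
  have := auxlt_add_of_le_lt hlin hmul (hf d hd) (hp c hc)
  simpa [add_comm] using this

include hlin hmul in
lemma auxBelow_mul' {f q : MvPolynomial (Fin N) R} {a b : Fin N →₀ ℕ}
    (hf : ∀ γ ∈ f.support, le γ a) (hq : AuxBelow le q b) :
    AuxBelow le (f * q) (a + b) := by
  have := auxBelow_mul hlin hmul hq hf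
  rw [mul_comm, add_comm] at this
  exact this

include hlin hmul in
lemma aux_mul_key {f g : MvPolynomial (Fin N) R} {a b : Fin N →₀ ℕ}
    {p q : MvPolynomial (Fin N) R}
    (hf : f = monomial a 1 + p) (hp : AuxBelow le p a)
    (hg : g = monomial b 1 + q) (hq : AuxBelow le q b) :
    ∃ s, f * g = monomial (a + b) 1 + s ∧ AuxBelow le s (a + b) := by
  classical
  haveI := hlin
  refine ⟨monomial a 1 * q + p * g, ?_, ?_⟩
  · rw [hf, hg]; ring_nf
    rw [MvPolynomial.monomial_mul]
    ring_nf
  · intro β hβ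
    rcases Finset.mem_union.1 (MvPolynomial.support_add hβ) with h | h
    · refine auxBelow_mul' hlin hmul (fun γ hγ => ?_) hq _ h
      have := MvPolynomial.support_monomial_subset hγ
      simp only [Finset.mem_singleton] at this
      exact this ▸ refl_of le a
    · refine auxBelow_mul hlin hmul hp (fun γ hγ => ?_) _ h
      rw [hg] at hγ
      rcases Finset.mem_union.1 (MvPolynomial.support_add hγ) with h' | h'
      · have := MvPolynomial.support_monomial_subset h'
        simp only [Finset.mem_singleton] at this
        exact this ▸ refl_of le b
      · exact auxlt_le hlin (hq γ h')

include hlin hmul in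
lemma aux_pow_key {f : MvPolynomial (Fin N) R} {a : Fin N →₀ ℕ} {p : MvPolynomial (Fin N) R}
    (hf : f = monomial a 1 + p) (hp : AuxBelow le p a) (n : ℕ) :
    ∃ q, f ^ n = monomial (n • a) 1 + q ∧ AuxBelow le q (n • a) := by
  induction n with
  | zero =>
    refine ⟨0, by simp, ?_⟩
    intro β hβ; simp at hβ
  | succ n ih =>
    obtain ⟨q, hq, hqb⟩ := ih
    obtain ⟨s, hs, hsb⟩ := aux_mul_key hlin hmul hq hqb hf hp
    refine ⟨s, ?_, ?_⟩
    · rw [pow_succ, hs, succ_nsmul]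
    · rw [succ_nsmul]; exact hsb

end Aux

theorem initial_ideal_invariant_under_unipotent
    (R : Type*) [CommRing R] (N : ℕ) (hN : 1 ≤ N)
    (le : (Fin N →₀ ℕ) → (Fin N →₀ ℕ) → Prop)
    (hlin : IsLinearOrder (Fin N →₀ ℕ) le)
    (hbot : ∀ a, le 0 a)
    (hmul : ∀ a b c, le a b → le (a + c) (b + c))
    (hvar : ∀ i j : Fin N, i < j →
      le (Finsupp.single i 1) (Finsupp.single j 1) ∧
      ¬ le (Finsupp.single j 1) (Finsupp.single i 1))
    (g : Fin N → Fin N → R)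
    (u : MvPolynomial (Fin N) R →ₐ[R] MvPolynomial (Fin N) R)
    (hu : ∀ j : Fin N, u (X j) =
      X j + ∑ i ∈ Finset.univ.filter (fun i => i < j), C (g i j) * X i) :
    Function.Bijective u ∧
    ∀ I : Ideal (MvPolynomial (Fin N) R),
      {dc : (Fin N →₀ ℕ) × R | ∃ f ∈ I, f ≠ 0 ∧ dc.1 ∈ f.support ∧
        (∀ d' ∈ f.support, le d' dc.1) ∧ f.coeff dc.1 = dc.2} =
      {dc : (Fin N →₀ ℕ) × R | ∃ f ∈ Ideal.map u.toRingHom I, f ≠ 0 ∧ dc.1 ∈ f.support ∧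
        (∀ d' ∈ f.support, le d' dc.1) ∧ f.coeff dc.1 = dc.2} := by
  classical
  haveI := hlin
  -- the lower-order part of `u (X j)`
  have hXj : ∀ j : Fin N, ∃ p, u (X j) = monomial (Finsupp.single j 1) 1 + p ∧
      AuxBelow le p (Finsupp.single j 1) := by
    intro j
    refine ⟨∑ i ∈ Finset.univ.filter (fun i => i < j), C (g i j) * X i, ?_, ?_⟩
    · rw [hu j, ← MvPolynomial.X_pow_eq_monomial, pow_one]
    · intro β hβ
      obtain ⟨i, hi, hβi⟩ := Finset.mem_biUnion.1 (MvPolynomial.support_sum hβ)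
      have hij : i < j := (Finset.mem_filter.1 hi).2
      have hXc : (MvPolynomial.X (R := R) i).coeff β ≠ 0 := by
        have h1 : (C (g i j) * X i : MvPolynomial (Fin N) R).coeff β ≠ 0 :=
          MvPolynomial.mem_support_iff.1 hβi
        rw [MvPolynomial.coeff_C_mul] at h1
        exact fun h => h1 (by rw [h, mul_zero])
      rw [MvPolynomial.coeff_X'] at hXc
      split_ifs at hXc with h
      · rw [← h]
        exact (hvar i j hij).2
      · simp at hXc
  -- key: u of a monic monomial
  have key1 : ∀ α : Fin N →₀ ℕ, ∃ r, u (monomial α 1) = monomial α 1 + r ∧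
      AuxBelow le r α := by
    intro α
    induction α using Finsupp.induction with
    | zero =>
      refine ⟨0, by simp, ?_⟩
      intro β hβ; simp at hβ
    | single_add j n α' hjα' hn ih =>
      obtain ⟨r', hr', hr'b⟩ := ih
      obtain ⟨p, hp, hpb⟩ := hXj j
      obtain ⟨q, hq, hqb⟩ := aux_pow_key hlin hmul hp hpb n
      have hsmul : n • Finsupp.single j 1 = Finsupp.single j n := by
        rw [Finsupp.smul_single, smul_eq_mul, mul_one]
      rw [hsmul] at hq hqb
      have hdecomp : monomial (Finsupp.single j n + α') (1 : R) =
          monomial (Finsupp.single j n) 1 * monomial α' 1 := by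
        rw [MvPolynomial.monomial_mul, one_mul]
      obtain ⟨s, hs, hsb⟩ := aux_mul_key hlin hmul hq hqb hr' hr'b
      refine ⟨s, ?_, hsb⟩
      have huu : u (monomial (Finsupp.single j n + α') (1 : R)) =
          (u (X j)) ^ n * u (monomial α' 1) := by
        rw [hdecomp, map_mul, ← MvPolynomial.X_pow_eq_monomial, map_pow]
      rw [huu, hs]
  -- key2: u f = f + (terms each strictly below some monomial of f)
  have key2 : ∀ f : MvPolynomial (Fin N) R, ∃ r, u f = f + r ∧
      ∀ β ∈ r.support, ∃ α ∈ f.support, AuxLt le β α := by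
    intro f
    choose r hr hrb using key1
    refine ⟨∑ α ∈ f.support, C (f.coeff α) * r α, ?_, ?_⟩
    · conv_lhs => rw [f.as_sum]
      rw [map_sum]
      have : ∀ α ∈ f.support,
          u (monomial α (f.coeff α)) = monomial α (f.coeff α) + C (f.coeff α) * r α := by
        intro α _
        have h1 : monomial α (f.coeff α) = C (f.coeff α) * monomial α 1 := by
          rw [MvPolynomial.C_mul_monomial, mul_one]
        have hC : u (C (f.coeff α)) = C (f.coeff α) := by
          rw [← MvPolynomial.algebraMap_eq]; exact u.commutes _
        rw [h1, map_mul, hC, hr α, mul_add, ← h1]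
      rw [Finset.sum_congr rfl this, Finset.sum_add_distrib, ← f.as_sum]
    · intro β hβ
      obtain ⟨α, hα, hβα⟩ := Finset.mem_biUnion.1 (MvPolynomial.support_sum hβ)
      refine ⟨α, hα, hrb α β ?_⟩
      have : (C (f.coeff α) * r α).coeff β ≠ 0 := MvPolynomial.mem_support_iff.1 hβα
      rw [MvPolynomial.coeff_C_mul] at this
      exact MvPolynomial.mem_support_iff.2 fun h => this (by rw [h, mul_zero])
  -- the leading pair is preserved by u
  have lead : ∀ f : MvPolynomial (Fin N) R, ∀ α, α ∈ f.support →
      (∀ β ∈ f.support, le β α) →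
      α ∈ (u f).support ∧ (∀ β ∈ (u f).support, le β α) ∧
      (u f).coeff α = f.coeff α := by
    intro f α hα hmax
    obtain ⟨r, hr, hrb⟩ := key2 f
    have hrα : r.coeff α = 0 := by
      by_contra h
      obtain ⟨γ, hγ, hlt⟩ := hrb α (MvPolynomial.mem_support_iff.2 h)
      exact hlt (hmax γ hγ)
    have hc : (u f).coeff α = f.coeff α := by
      rw [hr, MvPolynomial.coeff_add, hrα, add_zero]
    refine ⟨MvPolynomial.mem_support_iff.2 (hc ▸ MvPolynomial.mem_support_iff.1 hα), ?_, hc⟩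
    intro β hβ
    rw [hr] at hβ
    rcases Finset.mem_union.1 (MvPolynomial.support_add hβ) with h | h
    · exact hmax β h
    · obtain ⟨γ, hγ, hlt⟩ := hrb β h
      exact trans_of le (auxlt_le hlin hlt) (hmax γ hγ)
  -- existence of maxima of nonempty finite sets
  have exmax : ∀ s : Finset (Fin N →₀ ℕ), s.Nonempty → ∃ a ∈ s, ∀ b ∈ s, le b a := by
    intro s
    induction s using Finset.induction_on with
    | empty => intro h; simp at h
    | @insert x s hx ih =>
      intro _
      rcases s.eq_empty_or_nonempty with rfl | hs
      · exact ⟨x, by simp, fun b hb => by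
          simp only [Finset.mem_insert, Finset.notMem_empty, or_false] at hb
          exact hb ▸ refl_of le x⟩
      · obtain ⟨a, ha, hamax⟩ := ih hs
        rcases total_of le x a with h | h
        · exact ⟨a, Finset.mem_insert_of_mem ha, fun b hb => by
            rcases Finset.mem_insert.1 hb with rfl | hb
            · exact h
            · exact hamax b hb⟩
        · exact ⟨x, Finset.mem_insert_self x _, fun b hb => by
            rcases Finset.mem_insert.1 hb with rfl | hb
            · exact refl_of le b
            · exact trans_of le (hamax b hb) h⟩
  -- injectivity
  have hne : ∀ f : MvPolynomial (Fin N) R, f ≠ 0 → u f ≠ 0 := by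
    intro f hf
    obtain ⟨α, hα, hmax⟩ := exmax f.support (MvPolynomial.support_nonempty.2 hf)
    obtain ⟨hα', _, _⟩ := lead f α hα hmax
    intro h
    rw [h] at hα'
    simp at hα'
  have hinj : Function.Injective u := by
    intro a b hab
    have : u (a - b) = 0 := by rw [map_sub, hab, sub_self]
    by_contra h
    exact hne (a - b) (sub_ne_zero.2 h) this
  -- surjectivity
  have hsurj : Function.Surjective u := by
    have hX : ∀ n : ℕ, ∀ j : Fin N, j.val = n → X j ∈ u.range := by
      intro n
      induction n using Nat.strong_induction_on with
      | _ n ih =>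
        intro j hj
        have h1 : u (X j) ∈ u.range := ⟨X j, rfl⟩
        have h2 : (∑ i ∈ Finset.univ.filter (fun i => i < j), C (g i j) * X i : 
            MvPolynomial (Fin N) R) ∈ u.range := by
          refine Subalgebra.sum_mem _ fun i hi => ?_
          have hij : i < j := (Finset.mem_filter.1 hi).2
          have : (C (g i j) : MvPolynomial (Fin N) R) ∈ u.range := by
            rw [← MvPolynomial.algebraMap_eq]
            exact Subalgebra.algebraMap_mem _ _
          exact Subalgebra.mul_mem _ this (ih i.val (hj ▸ hij) i rfl)
        have : (X j : MvPolynomial (Fin N) R) = u (X j) -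
            ∑ i ∈ Finset.univ.filter (fun i => i < j), C (g i j) * X i := by
          rw [hu j]; ring
        rw [this]
        exact Subalgebra.sub_mem _ h1 h2
    have htop : u.range = ⊤ := by
      rw [← top_le_iff, ← MvPolynomial.adjoin_range_X]
      rw [Algebra.adjoin_le_iff]
      rintro x ⟨j, rfl⟩
      exact hX j.val j rfl
    intro y
    have : y ∈ u.range := htop ▸ Algebra.mem_top
    obtain ⟨x, hx⟩ := this
    exact ⟨x, hx⟩
  refine ⟨⟨hinj, hsurj⟩, ?_⟩
  intro I
  ext ⟨α, c⟩
  simp only [Set.mem_setOf_eq]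
  constructor
  · rintro ⟨f, hfI, hf0, hα, hmax, hc⟩
    obtain ⟨hα', hmax', hc'⟩ := lead f α hα hmax
    exact ⟨u f, Ideal.mem_map_of_mem u.toRingHom hfI, hne f hf0, hα', hmax', by rw [hc', hc]⟩
  · rintro ⟨h, hhI, hh0, hα, hmax, hc⟩
    obtain ⟨f, hfI, rfl⟩ := (Ideal.mem_map_iff_of_surjective u.toRingHom hsurj).1 hhI
    have hf0 : f ≠ 0 := fun h => hh0 (by rw [h]; simp)
    obtain ⟨αf, hαf, hmaxf⟩ := exmax f.support (MvPolynomial.support_nonempty.2 hf0)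
    obtain ⟨hαf', hmaxf', hcf'⟩ := lead f αf hαf hmaxf
    have hαeq : α = αf := antisymm_of le (hmaxf' α hα) (hmax αf hαf')
    subst hαeq
    exact ⟨f, hfI, hf0, hαf, hmaxf, by rw [← hcf']; exact hc⟩
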